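/- Let G be a finite group and let Φ denote the Frattini subgroup of G. Then G has non-zero spread (i.e., for every g ≠ 1 there exist x₁,…,x_{d−1} with ⟨g, x₁,…,x_{d−1}⟩ = G, where d = d(G)) if and only if G is efficiently generated (for all x ∈ G, d_{{x}}(G) = d(G) implies x ∈ Φ) and Φ = 1. -/

import Mathlib

/-- `d_{{x}}(G)`: the minimal number of elements of `G` generating `G` together
with the element `x`. -/
noncomputable def dWith {G : Type*} [Group G] (x : G) : ℕ :=
  sInf {k : ℕ | ∃ y : Fin k → G, Subgroup.closure ({x} ∪ Set.range y) = ⊤}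

theorem stmt_16 {G : Type*} [Group G] [Finite G] (d : ℕ) (hd : d = Group.rank G) :
    (∀ g : G, g ≠ 1 →
        ∃ x : Fin (d - 1) → G, Subgroup.closure ({g} ∪ Set.range x) = ⊤) ↔
      ((∀ x : G, dWith x = d → x ∈ frattini G) ∧ frattini G = ⊥) := by
  classical
  obtain ⟨S, hS1, hS2⟩ := Group.rank_spec G
  rw [← hd] at hS1
  -- if G is nontrivial then d ≥ 1
  have hnt : ∀ g : G, g ≠ 1 → 1 ≤ d := by
    intro g hg
    by_contra h
    push_neg at h
    have hd0 : d = 0 := Nat.lt_one_iff.mp h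
    rw [hd0] at hS1
    have hSe : S = ∅ := Finset.card_eq_zero.mp hS1
    rw [hSe] at hS2
    simp only [Finset.coe_empty, Subgroup.closure_empty] at hS2
    have : g ∈ (⊥ : Subgroup G) := hS2 ▸ Subgroup.mem_top g
    exact hg (Subgroup.mem_bot.mp this)
  -- the canonical generating family of size d
  have hdcardS : d = S.card := hS1.symm
  have hyd : ∀ g : G, ∃ y : Fin d → G, Subgroup.closure ({g} ∪ Set.range y) = ⊤ := by
    intro g
    refine ⟨fun i => ((S.equivFin.symm (finCongr hdcardS i)) : G), ?_⟩
    rw [eq_top_iff, ← hS2]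
    apply Subgroup.closure_mono
    intro s hs
    right
    exact ⟨finCongr hdcardS.symm (S.equivFin ⟨s, hs⟩), by simp⟩
  constructor
  · intro hspread
    have hd1 : ∀ g : G, g ≠ 1 → dWith g ≤ d - 1 := by
      intro g hg
      obtain ⟨x, hx⟩ := hspread g hg
      exact Nat.sInf_le ⟨x, hx⟩
    constructor
    · intro x hx
      by_cases h1 : x = 1
      · exact h1 ▸ (frattini G).one_mem
      · exfalso
        have h2 := hd1 x h1
        have h3 := hnt x h1
        omega
    · rw [eq_bot_iff]
      intro g hg
      rw [Subgroup.mem_bot]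
      by_contra hg1
      obtain ⟨x, hx⟩ := hspread g hg1
      have hcl : Subgroup.closure (Set.range x) = ⊤ := by
        apply frattini_nongenerating
        rw [eq_top_iff, ← hx]
        apply Subgroup.closure_le _ |>.mpr
        rintro s (rfl | hs)
        · exact Subgroup.mem_sup_right hg
        · exact Subgroup.mem_sup_left (Subgroup.subset_closure hs)
      have hle : Group.rank G ≤ d - 1 := by
        have h1 : Subgroup.closure ((Finset.image x Finset.univ : Finset G) : Set G) = ⊤ := by
          rwa [Finset.coe_image, Finset.coe_univ, Set.image_univ]
        calc Group.rank G ≤ (Finset.image x Finset.univ).card := Group.rank_le h1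
          _ ≤ (Finset.univ : Finset (Fin (d - 1))).card := Finset.card_image_le
          _ = d - 1 := by simp
      have := hnt g hg1
      omega
  · rintro ⟨heff, hbot⟩ g hg
    have hled : dWith g ≤ d := Nat.sInf_le (hyd g)
    have hne : dWith g ≠ d := by
      intro h
      have := heff g h
      rw [hbot, Subgroup.mem_bot] at this
      exact hg this
    have hlt : dWith g ≤ d - 1 := by
      have := hnt g hg
      omega
    have hmem : dWith g ∈ {k : ℕ | ∃ y : Fin k → G,
        Subgroup.closure ({g} ∪ Set.range y) = ⊤} :=
      Nat.sInf_mem ⟨d, hyd g⟩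
    obtain ⟨y, hy⟩ := hmem
    refine ⟨fun i => if h : (i : ℕ) < dWith g then y ⟨i, h⟩ else 1, ?_⟩
    rw [eq_top_iff, ← hy]
    apply Subgroup.closure_mono
    rintro s (rfl | ⟨j, rfl⟩)
    · exact Or.inl rfl
    · right
      have hj : (j : ℕ) < d - 1 := lt_of_lt_of_le j.2 hlt
      refine ⟨⟨j, hj⟩, ?_⟩
      simp only [dif_pos j.2]
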